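/- Let N be a positive integer and let L² be the Hilbert space of square-integrable complex functions on [0,1)^N with Lebesgue measure. Given complex numbers a_α for each α ⊆ {1,...,N}, define the bounded operator (𝒜u)(k) = Σ_{α ⊆ {1,...,N}} a_α ∫_{[0,1)^{|α|}} u(k with coordinates in α replaced by x_α) dx_α. Then the spectrum of 𝒜 equals the finite set {Σ_{β ⊆ α} a_β : α ⊆ {1,...,N}}. -/

import Mathlib

open MeasureTheory Complex Real Set

set_option linter.unusedVariables false
set_option linter.unnecessarySeqFocus false

/-- The cube `[0,1)^ι` with Lebesgue measure, modelled as the product of the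
Lebesgue measure on `ℝ` restricted to `[0,1)` over each coordinate. -/
noncomputable def cubeMeasure (ι : Type*) [Fintype ι] : Measure (ι → ℝ) :=
  Measure.pi fun _ => (volume : Measure ℝ).restrict (Set.Ico 0 1)

/-- `∫_{[0,1)^{|α|}} u(k with the coordinates in α replaced by x_α) dx_α`:
integration of `u` over the coordinates indexed by `α`, the remaining
coordinates being those of `k`.  For `α = ∅` this is `u k`. -/
noncomputable def partialIntegral {N : ℕ} (α : Finset (Fin N))
    (u : (Fin N → ℝ) → ℂ) (k : Fin N → ℝ) : ℂ :=
  ∫ x : {j // j ∈ α} → ℝ, u (fun j => if h : j ∈ α then x ⟨j, h⟩ else k j)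
    ∂(cubeMeasure {j // j ∈ α})

/-- Type synonym for `ℝ` carrying the measure `volume.restrict (Ico 0 1)`. -/
def UI : Type := ℝ

instance : MeasurableSpace UI := inferInstanceAs (MeasurableSpace ℝ)
noncomputable instance : MeasureSpace UI :=
  { toMeasurableSpace := inferInstanceAs (MeasurableSpace ℝ)
    volume := (volume : Measure ℝ).restrict (Set.Ico 0 1) }

instance : IsProbabilityMeasure ((volume : Measure ℝ).restrict (Set.Ico 0 1)) :=
  ⟨by simp [Real.volume_Ico]⟩

instance : IsProbabilityMeasure (volume : Measure UI) :=
  inferInstanceAs (IsProbabilityMeasure ((volume : Measure ℝ).restrict (Set.Ico 0 1)))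

instance (ι : Type*) [Fintype ι] : IsProbabilityMeasure (cubeMeasure ι) :=
  MeasureTheory.Measure.pi.instIsProbabilityMeasure _

lemma cubeMeasure_eq_volume (ι : Type*) [Fintype ι] :
    cubeMeasure ι = (volume : Measure (ι → UI)) := rfl

/-- product integral over the cube -/
lemma integral_cube_prod {ι : Type*} [Fintype ι] (f : ι → ℝ → ℂ) :
    ∫ x : ι → ℝ, ∏ i, f i (x i) ∂(cubeMeasure ι)
      = ∏ i, ∫ t, f i t ∂((volume : Measure ℝ).restrict (Set.Ico 0 1)) := by
  exact MeasureTheory.integral_fintype_prod_eq_prod (𝕜 := ℂ)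
    (E := fun _ => ℝ) (μ := fun _ => (volume : Measure ℝ).restrict (Set.Ico 0 1)) (fun i (t : ℝ) => f i t)

lemma integral_fourier_char (n : ℤ) :
    ∫ t, Complex.exp (2 * Real.pi * Complex.I * n * t)
        ∂((volume : Measure ℝ).restrict (Set.Ico 0 1))
      = if n = 0 then 1 else 0 := by
  rw [Measure.restrict_congr_set Ico_ae_eq_Ioc,
    ← intervalIntegral.integral_of_le (zero_le_one)]
  by_cases h : n = 0
  · simp [h]
  · rw [if_neg h]
    have hc : (2 * Real.pi * Complex.I * n : ℂ) ≠ 0 := by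
      simp [Real.pi_ne_zero, Complex.I_ne_zero, h]
    rw [integral_exp_mul_complex hc]
    have : Complex.exp (2 * Real.pi * Complex.I * n * 1) = 1 := by
      rw [mul_one]
      have := Complex.exp_int_mul_two_pi_mul_I n
      rw [← this]
      ring_nf
    rw [mul_one] at this
    simp [this, Complex.exp_zero]

/-- the exponential monomials on the cube -/
noncomputable def en {N : ℕ} (n : Fin N → ℤ) (k : Fin N → ℝ) : ℂ :=
  ∏ j, Complex.exp (2 * Real.pi * Complex.I * n j * k j)

lemma en_continuous {N : ℕ} (n : Fin N → ℤ) : Continuous (en n) := by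
  unfold en
  exact continuous_finset_prod _ fun j _ => by
    exact Complex.continuous_exp.comp (by continuity)

lemma norm_en {N : ℕ} (n : Fin N → ℤ) (k : Fin N → ℝ) : ‖en n k‖ = 1 := by
  unfold en
  rw [norm_prod]
  refine Finset.prod_eq_one fun j _ => ?_
  have : (2 * Real.pi * Complex.I * n j * k j : ℂ)
      = ((2 * Real.pi * n j * k j : ℝ) : ℂ) * Complex.I := by
    push_cast; ring
  rw [this, Complex.norm_exp_ofReal_mul_I]

lemma partialIntegral_en {N : ℕ} (β : Finset (Fin N)) (n : Fin N → ℤ) (k : Fin N → ℝ) :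
    partialIntegral β (en n) k = if (∀ j ∈ β, n j = 0) then en n k else 0 := by
  classical
  have hsplit : ∀ x : {j // j ∈ β} → ℝ,
      en n (fun j => if h : j ∈ β then x ⟨j, h⟩ else k j)
        = (∏ i : {j // j ∈ β}, Complex.exp (2 * Real.pi * Complex.I * n i.1 * x i))
          * ∏ j ∈ βᶜ, Complex.exp (2 * Real.pi * Complex.I * n j * k j) := by
    intro x
    unfold en
    rw [← Finset.prod_mul_prod_compl β]
    congr 1
    · rw [← Finset.prod_coe_sort β]
      exact Finset.prod_congr rfl fun i _ => by beta_reduce; rw [dif_pos i.2]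
    · exact Finset.prod_congr rfl fun j hj => by
        beta_reduce; rw [dif_neg (Finset.mem_compl.mp hj)]
  unfold partialIntegral
  simp_rw [hsplit]
  rw [integral_mul_const]
  have := integral_cube_prod (ι := {j // j ∈ β})
    (fun i t => Complex.exp (2 * Real.pi * Complex.I * n i.1 * t))
  rw [this]
  simp_rw [integral_fourier_char]
  by_cases h : ∀ j ∈ β, n j = 0
  · rw [if_pos h]
    have h1 : (∏ i : {j // j ∈ β}, if n i.1 = 0 then (1:ℂ) else 0) = 1 :=
      Finset.prod_eq_one fun i _ => by rw [if_pos (h i.1 i.2)]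
    rw [h1, one_mul]
    unfold en
    rw [← Finset.prod_mul_prod_compl β]
    have h2 : ∏ j ∈ β, Complex.exp (2 * Real.pi * Complex.I * n j * k j) = 1 :=
      Finset.prod_eq_one fun j hj => by rw [h j hj]; simp
    rw [h2, one_mul]
  · rw [if_neg h]
    push_neg at h
    obtain ⟨j, hj, hnj⟩ := h
    have h0 : (∏ i : {j // j ∈ β}, if n i.1 = 0 then (1:ℂ) else 0) = 0 := by
      refine Finset.prod_eq_zero (Finset.mem_univ (⟨j, hj⟩ : {j // j ∈ β})) ?_
      rw [if_neg hnj]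
    rw [h0, zero_mul]

lemma memLp_en {N : ℕ} (n : Fin N → ℤ) : MemLp (en n) 2 (cubeMeasure (Fin N)) := by
  refine MemLp.of_bound ((en_continuous n).aestronglyMeasurable) 1 ?_
  exact Filter.Eventually.of_forall fun k => le_of_eq (norm_en n k)

lemma partialIntegral_congr_ae {N : ℕ} (β : Finset (Fin N)) {f g : (Fin N → ℝ) → ℂ}
    (h : f =ᵐ[cubeMeasure (Fin N)] g) :
    (fun k => partialIntegral β f k) =ᵐ[cubeMeasure (Fin N)]
      (fun k => partialIntegral β g k) := by
  classical
  set e := MeasurableEquiv.piEquivPiSubtypeProd (fun _ : Fin N => ℝ) (fun j => j ∈ β) with he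
  have hmp : MeasurePreserving e (cubeMeasure (Fin N))
      ((cubeMeasure {j // j ∈ β}).prod (cubeMeasure {j // ¬ j ∈ β})) := by
    unfold cubeMeasure
    have h0 := measurePreserving_piEquivPiSubtypeProd
      (fun _ : Fin N => (volume : Measure ℝ).restrict (Set.Ico 0 1)) (fun j => j ∈ β)
    convert h0 using 2 <;> congr 1 <;> exact Subsingleton.elim _ _
  set π₁ := cubeMeasure {j // j ∈ β} with hπ₁
  set π₂ := cubeMeasure {j // ¬ j ∈ β} with hπ₂
  have hfg : (f ∘ e.symm) =ᵐ[π₁.prod π₂] (g ∘ e.symm) :=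
    (hmp.symm e).quasiMeasurePreserving.ae_eq_comp h
  haveI : IsProbabilityMeasure π₂ := by rw [hπ₂]; infer_instance
  haveI : IsFiniteMeasure π₂ := by infer_instance
  haveI : SigmaFinite π₂ := by infer_instance
  haveI : SFinite π₂ := by infer_instance
  have hswap : ((f ∘ e.symm) ∘ Prod.swap) =ᵐ[π₂.prod π₁] ((g ∘ e.symm) ∘ Prod.swap) :=
    (Measure.measurePreserving_swap).quasiMeasurePreserving.ae_eq_comp hfg
  have hslice : ∀ᵐ y ∂π₂, ∀ᵐ x ∂π₁, f (e.symm (x, y)) = g (e.symm (x, y)) :=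
    MeasureTheory.Measure.ae_ae_of_ae_prod hswap
  have hInt : (fun y => ∫ x, f (e.symm (x, y)) ∂π₁)
      =ᵐ[π₂] (fun y => ∫ x, g (e.symm (x, y)) ∂π₁) :=
    hslice.mono fun y hy => integral_congr_ae hy
  set proj : (Fin N → ℝ) → ({j // ¬ j ∈ β} → ℝ) := fun k j => k j.1 with hproj
  have hprojq : Measure.QuasiMeasurePreserving proj (cubeMeasure (Fin N)) π₂ := by
    have h2 : Measure.QuasiMeasurePreserving Prod.snd (π₁.prod π₂) π₂ :=
      Measure.quasiMeasurePreserving_snd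
    have : proj = Prod.snd ∘ ⇑e := rfl
    rw [this]
    exact h2.comp hmp.quasiMeasurePreserving
  have hcomp := hprojq.ae_eq_comp hInt
  have hid : ∀ (u : (Fin N → ℝ) → ℂ) (k : Fin N → ℝ),
      ((fun y => ∫ x, u (e.symm (x, y)) ∂π₁) ∘ proj) k = partialIntegral β u k := by
    intro u k
    unfold partialIntegral
    simp only [Function.comp_apply]
    refine integral_congr_ae (Filter.Eventually.of_forall fun x => ?_)
    have harg : (e.symm (x, proj k)) = (fun j => if h : j ∈ β then x ⟨j, h⟩ else k j) := by
      funext j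
      by_cases hj : j ∈ β
      · simp [he, MeasurableEquiv.piEquivPiSubtypeProd, Equiv.piEquivPiSubtypeProd, hj]
      · simp [he, MeasurableEquiv.piEquivPiSubtypeProd, Equiv.piEquivPiSubtypeProd, hj, hproj]
    show u (e.symm (x, proj k)) = u fun j => if h : j ∈ β then x ⟨j, h⟩ else k j
    rw [harg]
  calc (fun k => partialIntegral β f k)
      =ᵐ[cubeMeasure (Fin N)] ((fun y => ∫ x, f (e.symm (x, y)) ∂π₁) ∘ proj) :=
        Filter.Eventually.of_forall fun k => (hid f k).symm
    _ =ᵐ[cubeMeasure (Fin N)] ((fun y => ∫ x, g (e.symm (x, y)) ∂π₁) ∘ proj) := hcomp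
    _ =ᵐ[cubeMeasure (Fin N)] (fun k => partialIntegral β g k) :=
        Filter.Eventually.of_forall fun k => hid g k

noncomputable def fE {N : ℕ} (n : Fin N → ℤ) : Lp ℂ 2 (cubeMeasure (Fin N)) :=
  (memLp_en n).toLp (en n)

lemma coe_fE {N : ℕ} (n : Fin N → ℤ) : ⇑(fE n) =ᵐ[cubeMeasure (Fin N)] en n :=
  MemLp.coeFn_toLp _

lemma fE_ne_zero {N : ℕ} (n : Fin N → ℤ) : fE n ≠ 0 := by
  intro h
  have h0 : en n =ᵐ[cubeMeasure (Fin N)] 0 := by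
    have := coe_fE n
    rw [h] at this
    exact this.symm.trans (Lp.coeFn_zero ℂ 2 (cubeMeasure (Fin N)))
  have hne : (cubeMeasure (Fin N)) ≠ 0 := IsProbabilityMeasure.ne_zero _
  have : (Filter.NeBot (ae (cubeMeasure (Fin N)))) := ae_neBot.mpr hne
  obtain ⟨k, hk⟩ := h0.exists
  have := norm_en n k
  rw [hk] at this
  simp at this

lemma A_eigen {N : ℕ} (a : Finset (Fin N) → ℂ)
    (𝒜 : Lp ℂ 2 (cubeMeasure (Fin N)) →L[ℂ] Lp ℂ 2 (cubeMeasure (Fin N)))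
    (h𝒜 : ∀ u : Lp ℂ 2 (cubeMeasure (Fin N)),
      ⇑(𝒜 u) =ᵐ[cubeMeasure (Fin N)] fun k =>
        ∑ α : Finset (Fin N), a α * partialIntegral α (⇑u) k)
    (n : Fin N → ℤ) :
    𝒜 (fE n)
      = (∑ β ∈ (Finset.univ.filter fun j => n j = 0).powerset, a β) • fE n := by
  classical
  set c : ℂ := ∑ β ∈ (Finset.univ.filter fun j => n j = 0).powerset, a β with hc
  apply Lp.ext
  have h1 := h𝒜 (fE n)
  have h2 : ∀ᵐ k ∂(cubeMeasure (Fin N)), ∀ β : Finset (Fin N),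
      partialIntegral β (⇑(fE n)) k = partialIntegral β (en n) k :=
    ae_all_iff.mpr fun β => partialIntegral_congr_ae β (coe_fE n)
  have h3 : (fun k => ∑ β : Finset (Fin N), a β * partialIntegral β (⇑(fE n)) k)
      =ᵐ[cubeMeasure (Fin N)] fun k => c * en n k := by
    refine h2.mono fun k hk => ?_
    simp only
    rw [Finset.sum_congr rfl fun β _ => by rw [hk β, partialIntegral_en]]
    rw [Finset.sum_congr rfl fun β _ => (mul_ite _ (a β) _ _),
      Finset.sum_ite]
    simp only [mul_zero, Finset.sum_const_zero, add_zero]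
    rw [← Finset.sum_mul]
    congr 1
    rw [hc]
    congr 1
    ext β
    simp [Finset.subset_iff]
  have h4 : ⇑(c • fE n) =ᵐ[cubeMeasure (Fin N)] fun k => c * en n k := by
    refine (Lp.coeFn_smul c (fE n)).trans ?_
    exact (coe_fE n).mono fun k hk => by simp [hk]
  exact (h1.trans h3).trans h4.symm

instance : Fact ((0:ℝ) < 1) := ⟨one_pos⟩

instance : IsProbabilityMeasure (volume : Measure (AddCircle (1:ℝ))) :=
  ⟨by rw [AddCircle.measure_univ]; norm_num⟩

lemma mk_measurePreserving :
    MeasurePreserving (fun t : ℝ => (t : AddCircle (1:ℝ)))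
      ((volume : Measure ℝ).restrict (Set.Ico 0 1)) volume := by
  have h := AddCircle.measurePreserving_mk (1:ℝ) 0
  rw [zero_add] at h
  rwa [Measure.restrict_congr_set Ico_ae_eq_Ioc]

/-- the quotient map from the cube to the torus -/
noncomputable def torusMk (N : ℕ) : (Fin N → ℝ) → (Fin N → AddCircle (1:ℝ)) :=
  fun k j => (k j : AddCircle (1:ℝ))

lemma torusMk_measurePreserving (N : ℕ) :
    MeasurePreserving (torusMk N) (cubeMeasure (Fin N))
      (volume : Measure (Fin N → AddCircle (1:ℝ))) := by
  unfold cubeMeasure torusMk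
  rw [volume_pi]
  exact measurePreserving_pi _ _ (fun _ => mk_measurePreserving)

/-- the canonical section of the quotient map, valued in `[0,1)` -/
noncomputable def torusSec (N : ℕ) : (Fin N → AddCircle (1:ℝ)) → (Fin N → ℝ) :=
  fun x j => (AddCircle.equivIco 1 0 (x j) : ℝ)

lemma sec1_coe (t : ℝ) (ht : t ∈ Set.Ico (0:ℝ) 1) :
    ((AddCircle.equivIco 1 0 ((t : AddCircle (1:ℝ)))) : ℝ) = t := by
  have ht' : t ∈ Set.Ico (0:ℝ) (0 + 1) := by simpa using ht
  have : (AddCircle.equivIco 1 0) ((t : AddCircle (1:ℝ))) = ⟨t, ht'⟩ := by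
    rw [Equiv.apply_eq_iff_eq_symm_apply]; rfl
  rw [this]

lemma sec1_measurePreserving :
    MeasurePreserving (fun x : AddCircle (1:ℝ) => ((AddCircle.equivIco 1 0 x : ℝ)))
      volume ((volume : Measure ℝ).restrict (Set.Ico 0 1)) := by
  have hmk := mk_measurePreserving
  have hmeas : Measurable (fun x : AddCircle (1:ℝ) => ((AddCircle.equivIco 1 0 x : ℝ))) := by
    have h1 : Measurable (AddCircle.measurableEquivIco (T := 1) 0) :=
      (AddCircle.measurableEquivIco (T := 1) 0).measurable
    exact measurable_subtype_coe.comp h1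
  refine ⟨hmeas, ?_⟩
  have h2 : (fun x : AddCircle (1:ℝ) => ((AddCircle.equivIco 1 0 x : ℝ)))
      ∘ (fun t : ℝ => (t : AddCircle (1:ℝ)))
      =ᵐ[(volume : Measure ℝ).restrict (Set.Ico 0 1)] id := by
    refine (ae_restrict_mem measurableSet_Ico).mono fun t ht => ?_
    simp only [Function.comp_apply, id_eq]
    exact sec1_coe t ht
  calc Measure.map _ volume
      = Measure.map _ (Measure.map (fun t : ℝ => (t : AddCircle (1:ℝ)))
          ((volume : Measure ℝ).restrict (Set.Ico 0 1))) := by rw [hmk.map_eq]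
    _ = Measure.map ((fun x : AddCircle (1:ℝ) => ((AddCircle.equivIco 1 0 x : ℝ)))
          ∘ (fun t : ℝ => (t : AddCircle (1:ℝ)))) ((volume : Measure ℝ).restrict (Set.Ico 0 1)) :=
        Measure.map_map hmeas hmk.measurable
    _ = Measure.map id ((volume : Measure ℝ).restrict (Set.Ico 0 1)) := Measure.map_congr h2
    _ = (volume : Measure ℝ).restrict (Set.Ico 0 1) := Measure.map_id

lemma torusSec_measurePreserving (N : ℕ) :
    MeasurePreserving (torusSec N) (volume : Measure (Fin N → AddCircle (1:ℝ)))
      (cubeMeasure (Fin N)) := by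
  unfold cubeMeasure torusSec
  rw [volume_pi]
  exact measurePreserving_pi _ _ (fun _ => sec1_measurePreserving)

lemma ae_mem_Ico (N : ℕ) :
    ∀ᵐ k ∂(cubeMeasure (Fin N)), ∀ i, k i ∈ Set.Ico (0:ℝ) 1 := by
  rw [ae_all_iff]
  intro i
  rw [ae_iff]
  have hset : {k : Fin N → ℝ | ¬ k i ∈ Set.Ico (0:ℝ) 1}
      = Set.pi Set.univ (Function.update (fun _ : Fin N => Set.univ) i (Set.Ico (0:ℝ) 1)ᶜ) := by
    ext k
    simp only [Set.mem_setOf_eq, Set.mem_pi, Set.mem_univ, forall_true_left]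
    constructor
    · intro h j
      by_cases hj : j = i
      · subst hj; simpa [Function.update_self] using h
      · simp [Function.update_of_ne hj]
    · intro h
      have := h i
      simpa [Function.update_self] using this
  rw [hset]
  unfold cubeMeasure
  rw [Measure.pi_pi]
  refine Finset.prod_eq_zero (Finset.mem_univ i) ?_
  rw [Function.update_self, Measure.restrict_apply measurableSet_Ico.compl]
  simp

lemma torusSec_comp_mk (N : ℕ) :
    (torusSec N) ∘ (torusMk N) =ᵐ[cubeMeasure (Fin N)] id := by
  refine (ae_mem_Ico N).mono fun k hk => ?_
  funext j
  exact sec1_coe (k j) (hk j)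

open AddCircle in
/-- monomial characters on the torus -/
noncomputable def torusMon {N : ℕ} (n : Fin N → ℤ) : C(Fin N → AddCircle (1:ℝ), ℂ) :=
  ∏ j, (fourier (n j)).comp ⟨fun x => x j, continuous_apply j⟩

open AddCircle in
lemma torusMon_apply {N : ℕ} (n : Fin N → ℤ) (x : Fin N → AddCircle (1:ℝ)) :
    torusMon n x = ∏ j, fourier (n j) (x j) := by
  unfold torusMon
  simp

open AddCircle in
lemma torusMon_zero {N : ℕ} : torusMon (0 : Fin N → ℤ) = 1 := by
  ext x
  rw [torusMon_apply]
  simp [fourier_zero]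

open AddCircle in
lemma torusMon_mul {N : ℕ} (m n : Fin N → ℤ) :
    torusMon m * torusMon n = torusMon (m + n) := by
  ext x
  simp only [ContinuousMap.mul_apply, torusMon_apply, Pi.add_apply, fourier_add]
  rw [← Finset.prod_mul_distrib]

open AddCircle in
lemma star_torusMon {N : ℕ} (n : Fin N → ℤ) : star (torusMon n) = torusMon (-n) := by
  ext x
  simp only [ContinuousMap.star_apply, torusMon_apply, Pi.neg_apply, fourier_neg,
    RCLike.star_def, map_prod]

/-- the star subalgebra generated by the torus monomials -/
noncomputable def torusSubalgebra (N : ℕ) :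
    StarSubalgebra ℂ C(Fin N → AddCircle (1:ℝ), ℂ) where
  toSubalgebra := Algebra.adjoin ℂ (Set.range (torusMon (N := N)))
  star_mem' := by
    show Algebra.adjoin ℂ (Set.range (torusMon (N := N))) ≤
      star (Algebra.adjoin ℂ (Set.range (torusMon (N := N))))
    refine Algebra.adjoin_le ?_
    rintro - ⟨n, rfl⟩
    have h1 : star (torusMon n) ∈ Algebra.adjoin ℂ (Set.range (torusMon (N := N))) := by
      rw [star_torusMon]
      exact Algebra.subset_adjoin ⟨-n, rfl⟩
    exact h1

lemma torusSubalgebra_coe (N : ℕ) :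
    Subalgebra.toSubmodule (torusSubalgebra N).toSubalgebra
      = Submodule.span ℂ (Set.range (torusMon (N := N))) := by
  apply Algebra.adjoin_eq_span_of_subset
  refine Set.Subset.trans ?_ Submodule.subset_span
  intro x hx
  have hx' : x ∈ Submonoid.closure (Set.range (torusMon (N := N))) := hx
  induction hx' using Submonoid.closure_induction with
  | mem y hy => exact hy
  | one => exact ⟨0, torusMon_zero⟩
  | mul y z hyc hzc hy hz =>
      obtain ⟨m, rfl⟩ := hy hyc
      obtain ⟨n, rfl⟩ := hz hzc
      exact ⟨m + n, (torusMon_mul m n).symm⟩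

open AddCircle in
lemma torusSubalgebra_separatesPoints (N : ℕ) : (torusSubalgebra N).SeparatesPoints := by
  intro x y hxy
  obtain ⟨j, hj⟩ := Function.ne_iff.mp hxy
  refine ⟨_, ⟨torusMon (Pi.single j 1), Algebra.subset_adjoin ⟨_, rfl⟩, rfl⟩, ?_⟩
  have hval : ∀ z : Fin N → AddCircle (1:ℝ), torusMon (Pi.single j 1) z = toCircle (z j) := by
    intro z
    rw [torusMon_apply]
    rw [Finset.prod_eq_single j (fun i _ hij => by
      rw [Pi.single_eq_of_ne hij]; exact fourier_zero) (by simp)]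
    rw [Pi.single_eq_same, fourier_one]
  simp only [hval]
  intro h
  replace h : toCircle (x j) = toCircle (y j) := Circle.ext h
  exact hj (injective_toCircle one_ne_zero h)

lemma torusSubalgebra_closure_eq_top (N : ℕ) :
    (torusSubalgebra N).topologicalClosure = ⊤ :=
  ContinuousMap.starSubalgebra_topologicalClosure_eq_top_of_separatesPoints _
    (torusSubalgebra_separatesPoints N)

lemma span_torusMon_closure_eq_top (N : ℕ) :
    (Submodule.span ℂ (Set.range (torusMon (N := N)))).topologicalClosure = ⊤ := by
  rw [← torusSubalgebra_coe]
  exact congr_arg (Subalgebra.toSubmodule <| StarSubalgebra.toSubalgebra ·)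
    (torusSubalgebra_closure_eq_top N)

noncomputable def torusMonLp {N : ℕ} (n : Fin N → ℤ) :
    Lp ℂ 2 (volume : Measure (Fin N → AddCircle (1:ℝ))) :=
  ContinuousMap.toLp (E := ℂ) 2 (volume : Measure (Fin N → AddCircle (1:ℝ))) ℂ (torusMon n)

lemma span_torusMonLp_closure_eq_top (N : ℕ) :
    (Submodule.span ℂ (Set.range (torusMonLp (N := N)))).topologicalClosure = ⊤ := by
  convert (ContinuousMap.toLp_denseRange ℂ (volume : Measure (Fin N → AddCircle (1:ℝ))) ℂ
    (by norm_num : (2 : ENNReal) ≠ ⊤)).topologicalClosure_map_submodule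
    (span_torusMon_closure_eq_top N)
  · rfl
  erw [Submodule.map_span, ← Set.range_comp]
  rfl

noncomputable def Phi (N : ℕ) :
    Lp ℂ 2 (volume : Measure (Fin N → AddCircle (1:ℝ))) →ₗᵢ[ℂ] Lp ℂ 2 (cubeMeasure (Fin N)) :=
  Lp.compMeasurePreservingₗᵢ ℂ (torusMk N) (torusMk_measurePreserving N)

lemma coe_Phi (N : ℕ) (g : Lp ℂ 2 (volume : Measure (Fin N → AddCircle (1:ℝ)))) :
    ⇑(Phi N g) =ᵐ[cubeMeasure (Fin N)] ⇑g ∘ (torusMk N) :=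
  Lp.coeFn_compMeasurePreserving g (torusMk_measurePreserving N)

lemma Phi_surjective (N : ℕ) : Function.Surjective (Phi N) := by
  intro f
  set g := Lp.compMeasurePreserving (torusSec N) (torusSec_measurePreserving N) f with hg
  refine ⟨g, ?_⟩
  apply Lp.ext
  have h1 : ⇑(Phi N g) =ᵐ[cubeMeasure (Fin N)] ⇑g ∘ (torusMk N) := coe_Phi N g
  have h2 : ⇑g =ᵐ[(volume : Measure (Fin N → AddCircle (1:ℝ)))] ⇑f ∘ (torusSec N) :=
    Lp.coeFn_compMeasurePreserving f (torusSec_measurePreserving N)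
  have h3 : ⇑g ∘ (torusMk N) =ᵐ[cubeMeasure (Fin N)] (⇑f ∘ (torusSec N)) ∘ (torusMk N) :=
    (torusMk_measurePreserving N).quasiMeasurePreserving.ae_eq_comp h2
  have h5 : (⇑f ∘ (torusSec N)) ∘ (torusMk N) =ᵐ[cubeMeasure (Fin N)] ⇑f := by
    refine (torusSec_comp_mk N).mono fun k hk => ?_
    simp only [Function.comp_apply] at hk ⊢
    rw [show torusSec N (torusMk N k) = k from hk]
  exact (h1.trans h3).trans h5

open AddCircle in
lemma Phi_torusMonLp {N : ℕ} (n : Fin N → ℤ) : Phi N (torusMonLp n) = fE n := by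
  apply Lp.ext
  have h1 := coe_Phi N (torusMonLp n)
  have h2 : ⇑(torusMonLp n) =ᵐ[(volume : Measure (Fin N → AddCircle (1:ℝ)))] ⇑(torusMon n) :=
    ContinuousMap.coeFn_toLp _ _
  have h3 : ⇑(torusMonLp n) ∘ (torusMk N)
      =ᵐ[cubeMeasure (Fin N)] ⇑(torusMon n) ∘ (torusMk N) :=
    (torusMk_measurePreserving N).quasiMeasurePreserving.ae_eq_comp h2
  have h4 : ⇑(torusMon n) ∘ (torusMk N) = en n := by
    funext k
    simp only [Function.comp_apply, torusMon_apply, torusMk]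
    unfold en
    refine Finset.prod_congr rfl fun j _ => ?_
    rw [fourier_coe_apply]
    norm_num
  exact ((h1.trans h3).trans (h4 ▸ Filter.EventuallyEq.rfl)).trans (coe_fE n).symm

lemma span_fE_closure_eq_top (N : ℕ) :
    (Submodule.span ℂ (Set.range (fE (N := N)))).topologicalClosure = ⊤ := by
  have hd : DenseRange (Phi N).toContinuousLinearMap :=
    Function.Surjective.denseRange (Phi_surjective N)
  have h := hd.topologicalClosure_map_submodule (span_torusMonLp_closure_eq_top N)
  convert h using 2
  rw [Submodule.map_span]
  congr 1
  ext z
  constructor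
  · rintro ⟨n, rfl⟩
    exact ⟨torusMonLp n, ⟨n, rfl⟩, Phi_torusMonLp n⟩
  · rintro ⟨-, ⟨n, rfl⟩, rfl⟩
    exact ⟨n, (Phi_torusMonLp n).symm⟩

lemma pow_apply_eigen {E : Type*} [NormedAddCommGroup E] [NormedSpace ℂ E]
    (T : E →L[ℂ] E) (c : ℂ) (v : E) (hv : T v = c • v) (k : ℕ) :
    (T ^ k) v = c ^ k • v := by
  induction k with
  | zero => simp
  | succ k ih =>
      rw [pow_succ, pow_succ, ContinuousLinearMap.mul_apply, hv, ContinuousLinearMap.map_smul, ih, smul_smul,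
        mul_comm]

lemma aeval_apply_eigen {E : Type*} [NormedAddCommGroup E] [NormedSpace ℂ E]
    (T : E →L[ℂ] E) (c : ℂ) (v : E) (hv : T v = c • v) (q : Polynomial ℂ) :
    (Polynomial.aeval T q) v = q.eval c • v := by
  induction q using Polynomial.induction_on' with
  | add p q hp hq => simp [ContinuousLinearMap.add_apply, hp, hq, add_smul]
  | monomial k b =>
      rw [Polynomial.aeval_monomial, Polynomial.eval_monomial,
        ContinuousLinearMap.mul_apply, pow_apply_eigen T c v hv k, ContinuousLinearMap.map_smul,
        Algebra.algebraMap_eq_smul_one, ContinuousLinearMap.smul_apply,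
        ContinuousLinearMap.one_apply, smul_smul, mul_comm]

/-- the spectrum of the operator
`𝒜u = Σ_α a_α ∫_{[0,1)^{|α|}} u(· with α-coordinates replaced) dx_α` on
`L²([0,1)^N)` equals the finite set `{Σ_{β ⊆ α} a_β : α ⊆ {1,...,N}}`. -/
theorem stmt_15 (N : ℕ) (hN : 0 < N) (a : Finset (Fin N) → ℂ)
    (𝒜 : Lp ℂ 2 (cubeMeasure (Fin N)) →L[ℂ] Lp ℂ 2 (cubeMeasure (Fin N)))
    (h𝒜 : ∀ u : Lp ℂ 2 (cubeMeasure (Fin N)),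
      ⇑(𝒜 u) =ᵐ[cubeMeasure (Fin N)] fun k =>
        ∑ α : Finset (Fin N), a α * partialIntegral α (⇑u) k) :
    spectrum ℂ 𝒜 = {z : ℂ | ∃ α : Finset (Fin N), z = ∑ β ∈ α.powerset, a β} := by
  classical
  have heig : ∀ n : Fin N → ℤ, 𝒜 (fE n)
      = (∑ β ∈ (Finset.univ.filter fun j => n j = 0).powerset, a β) • fE n :=
    A_eigen a 𝒜 h𝒜
  haveI hnt : Nontrivial (Lp ℂ 2 (cubeMeasure (Fin N))) :=
    ⟨fE 0, 0, fE_ne_zero 0⟩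
  ext z
  simp only [Set.mem_setOf_eq]
  constructor
  · intro hz
    set P : Polynomial ℂ :=
      ∏ α : Finset (Fin N), (Polynomial.X - Polynomial.C (∑ β ∈ α.powerset, a β)) with hP
    have hker : ∀ n : Fin N → ℤ, (Polynomial.aeval 𝒜 P) (fE n) = 0 := by
      intro n
      rw [aeval_apply_eigen 𝒜 _ _ (heig n)]
      have h0 : P.eval (∑ β ∈ (Finset.univ.filter fun j => n j = 0).powerset, a β) = 0 := by
        rw [hP, Polynomial.eval_prod]
        refine Finset.prod_eq_zero
          (Finset.mem_univ (Finset.univ.filter fun j => n j = 0)) ?_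
        rw [Polynomial.eval_sub, Polynomial.eval_X, Polynomial.eval_C, sub_self]
      rw [h0, zero_smul]
    have hPA : (Polynomial.aeval 𝒜 P : Lp ℂ 2 (cubeMeasure (Fin N)) →L[ℂ]
        Lp ℂ 2 (cubeMeasure (Fin N))) = 0 := by
      apply ContinuousLinearMap.ext
      intro v
      have hv : v ∈ (Submodule.span ℂ (Set.range (fE (N := N)))).topologicalClosure := by
        rw [span_fE_closure_eq_top N]; trivial
      have hle : (Submodule.span ℂ (Set.range (fE (N := N)))).topologicalClosure
          ≤ LinearMap.ker ((Polynomial.aeval 𝒜 P : Lp ℂ 2 (cubeMeasure (Fin N)) →L[ℂ]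
              Lp ℂ 2 (cubeMeasure (Fin N))) : Lp ℂ 2 (cubeMeasure (Fin N)) →ₗ[ℂ]
              Lp ℂ 2 (cubeMeasure (Fin N))) := by
        refine Submodule.topologicalClosure_minimal _ ?_ ?_
        · rw [Submodule.span_le]
          rintro - ⟨n, rfl⟩
          exact LinearMap.mem_ker.mpr (hker n)
        · exact ContinuousLinearMap.isClosed_ker (Polynomial.aeval 𝒜 P :
            Lp ℂ 2 (cubeMeasure (Fin N)) →L[ℂ] Lp ℂ 2 (cubeMeasure (Fin N)))
      have := hle hv
      rw [LinearMap.mem_ker] at this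
      simpa using this
    have hsub := spectrum.subset_polynomial_aeval 𝒜 P
    have hz' : P.eval z ∈ spectrum ℂ (Polynomial.aeval 𝒜 P) := hsub ⟨z, hz, rfl⟩
    rw [hPA, spectrum.zero_eq] at hz'
    have hz0 : P.eval z = 0 := hz'
    rw [hP, Polynomial.eval_prod] at hz0
    obtain ⟨α, -, hα⟩ := Finset.prod_eq_zero_iff.mp hz0
    refine ⟨α, ?_⟩
    rw [Polynomial.eval_sub, Polynomial.eval_X, Polynomial.eval_C] at hα
    exact sub_eq_zero.mp hα
  · rintro ⟨α, rfl⟩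
    set n : Fin N → ℤ := fun j => if j ∈ α then 0 else 1 with hn
    have hfilter : (Finset.univ.filter fun j => n j = 0) = α := by
      ext j
      by_cases hj : j ∈ α <;> simp [hn, hj]
    have he := heig n
    rw [hfilter] at he
    rw [spectrum.mem_iff]
    intro hunit
    obtain ⟨u, hu⟩ := hunit
    set c : ℂ := ∑ β ∈ α.powerset, a β with hc
    have h0 : ((algebraMap ℂ (Lp ℂ 2 (cubeMeasure (Fin N)) →L[ℂ]
        Lp ℂ 2 (cubeMeasure (Fin N))) c) - 𝒜) (fE n) = 0 := by
      rw [ContinuousLinearMap.sub_apply, he, Algebra.algebraMap_eq_smul_one,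
        ContinuousLinearMap.smul_apply, ContinuousLinearMap.one_apply, sub_self]
    have hzero : fE n = 0 := by
      calc fE n = ((↑u⁻¹ * ↑u : Lp ℂ 2 (cubeMeasure (Fin N)) →L[ℂ]
            Lp ℂ 2 (cubeMeasure (Fin N)))) (fE n) := by
              rw [Units.inv_mul]; rfl
        _ = (↑u⁻¹ : Lp ℂ 2 (cubeMeasure (Fin N)) →L[ℂ]
            Lp ℂ 2 (cubeMeasure (Fin N))) ((↑u : Lp ℂ 2 (cubeMeasure (Fin N)) →L[ℂ]
            Lp ℂ 2 (cubeMeasure (Fin N))) (fE n)) := rfl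
        _ = 0 := by rw [hu, h0, map_zero]
    exact fE_ne_zero n hzero
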